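/- Let W ∈ ℝ^{N×N} satisfy 1_Nᵀ W = 0, W 1_N = 0, and W + Wᵀ + (1/N) 1_N 1_Nᵀ positive definite, and let α, β > 0. For the primal iteration x^{(τ+1)} = x^{(τ)} − αβ (W ⊗ I_n) ∇_x L(x^{(τ)}, μ^{(τ)}), the equality x^{(τ+1)} = x^{(τ)} holds if and only if ∇_x L(x^{(τ)}, μ^{(τ)}) = (1_N ⊗ I_n) p for some p ∈ ℝ^n (in particular this includes the case ∇_x L(x^{(τ)}, μ^{(τ)}) = 0 with p = 0). -/

import Mathlib

open scoped Kronecker Matrix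

/-- Lemma 1(iii) of the paper.
If `1_Nᵀ W = 0`, `W 1_N = 0`, `W + Wᵀ + (1/N) 1_N 1_Nᵀ ≻ 0` and `α, β > 0`, then for the
primal iteration `x^{(τ+1)} = x^{(τ)} − αβ (W ⊗ I_n) ∇_x L(x^{(τ)}, μ^{(τ)})`, the equality
`x^{(τ+1)} = x^{(τ)}` holds iff `∇_x L(x^{(τ)}, μ^{(τ)}) = (1_N ⊗ I_n) p` for some `p ∈ ℝ^n`
(which includes `∇_x L = 0` with `p = 0`). -/
theorem stmt_3
    (N n m : ℕ) (hN : 0 < N) (hn : 0 < n) (hm : 0 < m)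
    (f : EuclideanSpace ℝ (Fin N × Fin n) → ℝ)
    (g : EuclideanSpace ℝ (Fin N × Fin n) → Fin m → ℝ)
    (hf : ContDiff ℝ 1 f) (hfconv : ConvexOn ℝ Set.univ f)
    (hg : ∀ q, ContDiff ℝ 1 (fun x => g x q))
    (hgconv : ∀ q, ConvexOn ℝ Set.univ (fun x => g x q))
    (ν ε : ℝ) (hν : 0 < ν) (hε : 0 < ε)
    (L : EuclideanSpace ℝ (Fin N × Fin n) → EuclideanSpace ℝ (Fin m) → ℝ)
    (hL : ∀ x μ, L x μ =
      f x + ν / 2 * ‖x‖ ^ 2 + ∑ q, μ q * g x q - ε / 2 * ‖μ‖ ^ 2)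
    (gradL : EuclideanSpace ℝ (Fin N × Fin n) → EuclideanSpace ℝ (Fin m) →
      EuclideanSpace ℝ (Fin N × Fin n))
    (hgrad : ∀ x μ, HasGradientAt (fun y => L y μ) (gradL x μ) x)
    (W : Matrix (Fin N) (Fin N) ℝ)
    (hWl : Matrix.vecMul (fun _ => (1 : ℝ)) W = 0)
    (hWr : W *ᵥ (fun _ => (1 : ℝ)) = 0)
    (hWpos : (W + Wᵀ + ((1 : ℝ) / N) • Matrix.of (fun _ _ => (1 : ℝ))).PosDef)
    (α β : ℝ) (hα : 0 < α) (hβ : 0 < β)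
    (x : ℕ → EuclideanSpace ℝ (Fin N × Fin n))
    (μ : ℕ → EuclideanSpace ℝ (Fin m))
    (hiter : ∀ τ', x (τ' + 1) = x τ' -
      (α * β) • Matrix.toEuclideanLin (W ⊗ₖ (1 : Matrix (Fin n) (Fin n) ℝ))
        (gradL (x τ') (μ τ')))
    (τ : ℕ) :
    x (τ + 1) = x τ ↔
      ∃ p : Fin n → ℝ, gradL (x τ) (μ τ) =
        (EuclideanSpace.equiv (Fin N × Fin n) ℝ).symm (fun q => p q.2) := by
  have hαβ : (α * β) ≠ 0 := by positivity
  set v := gradL (x τ) (μ τ) with hv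
  -- kernel characterization of W
  have ker : ∀ u : Fin N → ℝ, W *ᵥ u = 0 ↔ ∃ c : ℝ, u = fun _ => c := by
    intro u
    constructor
    · intro hu
      set c : ℝ := (∑ i, u i) / N with hc
      set w : Fin N → ℝ := u - (fun _ => c) with hw
      have hsum : ∑ i, w i = 0 := by
        have hN' : (N : ℝ) ≠ 0 := Nat.cast_ne_zero.mpr hN.ne'
        simp only [hw, Pi.sub_apply, Finset.sum_sub_distrib, Finset.sum_const,
          Finset.card_univ, Fintype.card_fin, nsmul_eq_mul, hc]
        field_simp
        ring
      have hconst : (fun _ : Fin N => c) = c • (fun _ : Fin N => (1:ℝ)) := by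
        funext i; simp
      have hWw : W *ᵥ w = 0 := by
        rw [hw, Matrix.mulVec_sub, hu, hconst, Matrix.mulVec_smul, hWr]
        simp
      have hw0 : w = 0 := by
        by_contra hw0
        have hpos := hWpos.dotProduct_mulVec_pos hw0
        have h1 : w ⬝ᵥ (W *ᵥ w) = 0 := by rw [hWw]; simp
        have h2 : w ⬝ᵥ (Wᵀ *ᵥ w) = 0 := by
          rw [Matrix.dotProduct_mulVec, Matrix.vecMul_transpose, hWw]
          simp
        have h3 : ((((1 : ℝ) / N) • Matrix.of (fun _ _ => (1:ℝ)) :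
            Matrix (Fin N) (Fin N) ℝ)) *ᵥ w = 0 := by
          funext i
          simp [Matrix.mulVec, dotProduct, ← Finset.mul_sum, hsum]
        have : star w ⬝ᵥ ((W + Wᵀ + ((1 : ℝ) / N) • Matrix.of (fun _ _ => (1 : ℝ))) *ᵥ w)
            = 0 := by
          rw [Matrix.add_mulVec, Matrix.add_mulVec, h3]
          simp [dotProduct_add, h1, h2]
        rw [this] at hpos
        exact lt_irrefl 0 hpos
      refine ⟨c, ?_⟩
      funext i
      have := congrFun hw0 i
      simp only [hw, Pi.sub_apply, Pi.zero_apply, sub_eq_zero] at this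
      exact this
    · rintro ⟨c, rfl⟩
      have hconst : (fun _ : Fin N => c) = c • (fun _ : Fin N => (1:ℝ)) := by
        funext i; simp
      rw [hconst, Matrix.mulVec_smul, hWr]
      simp
  -- componentwise formula for the Kronecker mulVec
  have hmv : ∀ (u : EuclideanSpace ℝ (Fin N × Fin n)) (i : Fin N) (j : Fin n),
      ((W ⊗ₖ (1 : Matrix (Fin n) (Fin n) ℝ)) *ᵥ (WithLp.equiv 2 (Fin N × Fin n → ℝ)) u) (i, j)
        = (W *ᵥ fun i' => u (i', j)) i := by
    intro u i j
    simp [Matrix.mulVec, dotProduct, Fintype.sum_prod_type,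
      Matrix.one_apply, mul_ite, ite_mul, eq_comm]
  rw [hiter τ, sub_eq_self, smul_eq_zero, or_iff_right hαβ]
  constructor
  · intro h0
    have hj : ∀ j : Fin n, W *ᵥ (fun i => v (i, j)) = 0 := by
      intro j
      funext i
      have h := congrArg (fun z => z (i, j)) h0
      rw [Matrix.toEuclideanLin_apply] at h
      simp only [WithLp.equiv_apply, WithLp.ofLp_toLp] at hmv h
      rw [hmv v i j] at h
      simpa using h
    choose c hc using fun j => (ker _).mp (hj j)
    refine ⟨c, ?_⟩
    ext q
    have := congrFun (hc q.2) q.1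
    simpa using this
  · rintro ⟨p, hp⟩
    ext q
    obtain ⟨i, j⟩ := q
    rw [Matrix.toEuclideanLin_apply]
    have hvij : ∀ i' j', v (i', j') = p j' := by
      intro i' j'
      have := congrArg (fun z => z (i', j')) hp
      simpa using this
    have : (fun i' => v (i', j)) = fun _ : Fin N => p j := by
      funext i'; exact hvij i' j
    have hz : W *ᵥ (fun i' => v (i', j)) = 0 := by
      rw [this]; exact (ker _).mpr ⟨p j, rfl⟩
    simp only [WithLp.equiv_apply, WithLp.ofLp_toLp] at hmv ⊢
    rw [hmv v i j]
    simpa using congrFun hz i
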